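/- Let (A^V, X, Φ) be a symbolic dynamical system with Φ : X → X equicontinuous and surjective. Then (X, Φ) is an odometer bundle: for every x ∈ X, the orbit closure system (cl{Φᵗ(x) : t ∈ ℕ}, Φ) is an inverse limit of finite cyclic permutation systems. Equivalently, (X,Φ) is an inverse limit of finite permutation dynamical systems. -/

import Mathlib

open Filter Topology

/-- An equicontinuous surjective symbolic dynamical system is an odometer bundle: it is
topologically conjugate to the inverse limit of a sequence of finite permutation
dynamical systems (conjugacy given by a bijection whose coordinates are locally constant,
which is equivariant for the dynamics). -/
theorem equicontinuous_surjective_is_odometer_bundle {V A : Type*} [Countable V]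
    [Fintype A] [TopologicalSpace A] [DiscreteTopology A]
    (X : Set (V → A)) (hX : Perfect X)
    (Φ : (V → A) → (V → A)) (hΦ : Continuous Φ) (hm : Set.MapsTo Φ X X)
    (hsurj : Set.SurjOn Φ X X)
    (hequi : ∀ W : Finset V, ∃ U : Finset V, (W : Set V) ⊆ (U : Set V) ∧
      ∀ x ∈ X, ∀ y ∈ X, (∀ u ∈ U, x u = y u) →
        ∀ (t : ℕ), ∀ w ∈ W, Φ^[t] x w = Φ^[t] y w) :
    ∃ (Y : ℕ → Type) (_ : ∀ n, Finite (Y n)) (σ : ∀ n, Y n ≃ Y n)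
      (π : ∀ n, Y (n + 1) → Y n),
      (∀ n, Function.Surjective (π n)) ∧
      (∀ n y, π n (σ (n + 1) y) = σ n (π n y)) ∧
      ∃ e : {x // x ∈ X} ≃ {y : ∀ n, Y n // ∀ n, π n (y (n + 1)) = y n},
        (∀ n, IsLocallyConstant fun x : {x // x ∈ X} => (e x).1 n) ∧
        ∀ (x : {x // x ∈ X}) (n : ℕ), (e ⟨Φ x.1, hm x.2⟩).1 n = σ n ((e x).1 n) := by
  classical
  -- exhaustion of V by finite sets
  obtain ⟨f, hf⟩ := Countable.exists_injective_nat V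
  have hWfin : ∀ n : ℕ, (f ⁻¹' Set.Iio n).Finite :=
    fun n => (Set.finite_Iio n).preimage hf.injOn
  set Wf : ℕ → Finset V := fun n => (hWfin n).toFinset with hWf
  have hWmem : ∀ n v, v ∈ Wf n ↔ f v < n := by
    intro n v; simp [hWf, Set.Finite.mem_toFinset]
  have hWmono : ∀ n, ∀ v ∈ Wf n, v ∈ Wf (n + 1) := by
    intro n v hv; rw [hWmem] at hv ⊢; omega
  -- equicontinuity data
  choose U hUsub hU using hequi
  -- the orbit maps
  set Orb : ∀ n : ℕ, {x // x ∈ X} → (ℕ → {v // v ∈ Wf n} → A) :=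
    fun n x t w => Φ^[t] x.1 w.1 with hOrb
  -- finiteness of ranges
  have hOrbU : ∀ n, ∀ x y : {x // x ∈ X},
      (∀ u : {u // u ∈ U (Wf n)}, x.1 u.1 = y.1 u.1) → Orb n x = Orb n y := by
    intro n x y h
    funext t w
    exact hU (Wf n) x.1 x.2 y.1 y.2 (fun u hu => h ⟨u, hu⟩) t w.1 w.2
  have hfin : ∀ n, Finite (Set.range (Orb n)) := by
    intro n
    have : Function.Injective
        (fun y : Set.range (Orb n) => fun u : {u // u ∈ U (Wf n)} => (y.2.choose).1 u.1) := by
      intro y₁ y₂ h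
      have h1 : Orb n y₁.2.choose = y₁.1 := y₁.2.choose_spec
      have h2 : Orb n y₂.2.choose = y₂.1 := y₂.2.choose_spec
      have := hOrbU n y₁.2.choose y₂.2.choose (fun u => congrFun h u)
      exact Subtype.ext (h1 ▸ h2 ▸ this)
    exact Finite.of_injective _ this
  -- shift and restriction on the codomains
  have hshift : ∀ n (x : {x // x ∈ X}),
      (fun t => Orb n x (t + 1)) = Orb n ⟨Φ x.1, hm x.2⟩ := by
    intro n x; funext t w
    simp only [hOrb, Function.iterate_succ_apply]
  -- q : X → range (Orb n)
  set q : ∀ n, {x // x ∈ X} → Set.range (Orb n) :=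
    fun n x => ⟨Orb n x, ⟨x, rfl⟩⟩ with hq
  -- shift map on ranges
  have Smem : ∀ n (y : Set.range (Orb n)), (fun t => y.1 (t + 1)) ∈ Set.range (Orb n) := by
    rintro n ⟨y, x, rfl⟩
    exact ⟨⟨Φ x.1, hm x.2⟩, (hshift n x).symm⟩
  set S : ∀ n, Set.range (Orb n) → Set.range (Orb n) :=
    fun n y => ⟨fun t => y.1 (t + 1), Smem n y⟩ with hS
  have hSq : ∀ n x, S n (q n x) = q n ⟨Φ x.1, hm x.2⟩ := by
    intro n x; exact Subtype.ext (hshift n x)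
  have hSsurj : ∀ n, Function.Surjective (S n) := by
    rintro n ⟨y, x, rfl⟩
    obtain ⟨z, hzX, hz⟩ := hsurj x.2
    refine ⟨q n ⟨z, hzX⟩, ?_⟩
    have : (⟨Φ z, hm hzX⟩ : {x // x ∈ X}) = x := Subtype.ext hz
    rw [hSq]; rw [this]
  have hSbij : ∀ n, Function.Bijective (S n) := by
    intro n
    haveI := hfin n
    exact (Finite.surjective_iff_bijective).mp (hSsurj n)
  -- restriction maps
  have pmem : ∀ n (y : Set.range (Orb (n + 1))),
      (fun t (w : {v // v ∈ Wf n}) => y.1 t ⟨w.1, hWmono n w.1 w.2⟩) ∈ Set.range (Orb n) := by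
    rintro n ⟨y, x, rfl⟩
    exact ⟨x, rfl⟩
  set p : ∀ n, Set.range (Orb (n + 1)) → Set.range (Orb n) :=
    fun n y => ⟨fun t w => y.1 t ⟨w.1, hWmono n w.1 w.2⟩, pmem n y⟩ with hp
  have hpq : ∀ n x, p n (q (n + 1) x) = q n x := by
    intro n x; exact Subtype.ext rfl
  have hpsurj : ∀ n, Function.Surjective (p n) := by
    rintro n ⟨y, x, rfl⟩
    exact ⟨q (n + 1) x, hpq n x⟩
  have hpS : ∀ n y, p n (S (n + 1) y) = S n (p n y) := by
    intro n y; exact Subtype.ext rfl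
  -- shrink to Type 0
  haveI : ∀ n, Finite (Set.range (Orb n)) := hfin
  set E : ∀ n, Set.range (Orb n) ≃ Shrink.{0} (Set.range (Orb n)) :=
    fun n => equivShrink _ with hE
  refine ⟨fun n => Shrink.{0} (Set.range (Orb n)), fun n => inferInstance,
    fun n => (E n).symm.trans ((Equiv.ofBijective _ (hSbij n)).trans (E n)),
    fun n => E n ∘ p n ∘ (E (n + 1)).symm, ?_, ?_, ?_⟩
  · intro n
    exact (E n).surjective.comp ((hpsurj n).comp (E (n + 1)).symm.surjective)
  · intro n y
    simp only [Equiv.trans_apply, Equiv.symm_apply_apply, Function.comp_apply]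
    rw [Equiv.ofBijective_apply, Equiv.ofBijective_apply, hpS]
  -- the conjugacy
  set eF : {x // x ∈ X} →
      {y : ∀ n, Shrink.{0} (Set.range (Orb n)) //
        ∀ n, (E n ∘ p n ∘ (E (n + 1)).symm) (y (n + 1)) = y n} :=
    fun x => ⟨fun n => E n (q n x), by
      intro n
      simp only [Function.comp_apply, Equiv.symm_apply_apply, hpq]⟩ with heF
  have heFbij : Function.Bijective eF := by
    constructor
    · intro x y h
      have h' : ∀ n, q n x = q n y := by
        intro n
        have := congrFun (congrArg Subtype.val h) n
        exact (E n).injective this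
      apply Subtype.ext; funext v
      have hv : v ∈ Wf (f v + 1) := (hWmem _ v).mpr (by omega)
      have := congrFun (congrFun (congrArg Subtype.val (h' (f v + 1))) 0) ⟨v, hv⟩
      simpa [hq, hOrb] using this
    · rintro ⟨y, hy⟩
      -- inverse limit point: compactness argument
      set yn : ∀ n, Set.range (Orb n) := fun n => (E n).symm (y n) with hyn
      have hcompat : ∀ n, p n (yn (n + 1)) = yn n := by
        intro n
        have h := hy n
        simp only [Function.comp_apply] at h
        apply (E n).injective
        simpa [hyn] using h
      set C : ℕ → Set {x // x ∈ X} := fun n => {x | Orb n x = (yn n).1} with hC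
      have hCne : ∀ n, (C n).Nonempty := by
        intro n
        obtain ⟨x, hx⟩ := (yn n).2
        exact ⟨x, hx⟩
      have hCclosed : ∀ n, IsClosed (C n) := by
        intro n
        have : C n = ⋂ (t : ℕ), ⋂ (w : {v // v ∈ Wf n}),
            {x : {x // x ∈ X} | Φ^[t] x.1 w.1 = (yn n).1 t w} := by
          ext x
          simp only [hC, hOrb, Set.mem_setOf_eq, Set.mem_iInter, funext_iff]
        rw [this]
        refine isClosed_iInter fun t => isClosed_iInter fun w => ?_
        have hc : Continuous fun x : {x // x ∈ X} => Φ^[t] x.1 w.1 :=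
          (continuous_apply w.1).comp ((hΦ.iterate t).comp continuous_subtype_val)
        exact (isClosed_singleton (x := (yn n).1 t w)).preimage hc
      have hCanti : ∀ n, C (n + 1) ⊆ C n := by
        intro n x hx
        have hx' : Orb (n + 1) x = (yn (n + 1)).1 := hx
        have h2 : Orb n x = (p n (yn (n + 1))).1 := by
          funext t w
          exact congrFun (congrFun hx' t) ⟨w.1, hWmono n w.1 w.2⟩
        show Orb n x = (yn n).1
        rw [h2, hcompat]
      haveI : CompactSpace {x // x ∈ X} := by
        rw [← isCompact_iff_compactSpace]
        exact hX.closed.isCompact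
      have hnon : (⋂ n, C n).Nonempty := by
        apply IsCompact.nonempty_iInter_of_sequence_nonempty_isCompact_isClosed C hCanti hCne
        · exact (hCclosed 0).isCompact
        · exact hCclosed
      obtain ⟨x, hx⟩ := hnon
      refine ⟨x, ?_⟩
      apply Subtype.ext; funext n
      have hxn : q n x = yn n := Subtype.ext (Set.mem_iInter.mp hx n)
      show E n (q n x) = y n
      rw [hxn, hyn, Equiv.apply_symm_apply]
  refine ⟨Equiv.ofBijective eF heFbij, ?_, ?_⟩
  · intro n
    rw [IsLocallyConstant.iff_eventually_eq]
    intro x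
    have hopen : IsOpen {z : {x // x ∈ X} | ∀ u : {u // u ∈ U (Wf n)}, z.1 u.1 = x.1 u.1} := by
      have : {z : {x // x ∈ X} | ∀ u : {u // u ∈ U (Wf n)}, z.1 u.1 = x.1 u.1} =
          ⋂ u : {u // u ∈ U (Wf n)}, {z : {x // x ∈ X} | z.1 u.1 = x.1 u.1} := by
        ext z; simp [Set.mem_iInter]
      rw [this]
      refine isOpen_iInter_of_finite fun u => ?_
      have h2 : {z : {x // x ∈ X} | z.1 u.1 = x.1 u.1} =
          (fun z : {x // x ∈ X} => z.1 u.1) ⁻¹' {x.1 u.1} := rfl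
      rw [h2]
      exact (isOpen_discrete _).preimage ((continuous_apply u.1).comp continuous_subtype_val)
    filter_upwards [hopen.mem_nhds (fun u => rfl)] with z hz
    show ((Equiv.ofBijective eF heFbij) z).1 n = ((Equiv.ofBijective eF heFbij) x).1 n
    simp only [Equiv.ofBijective_apply, heF]
    congr 1
    exact Subtype.ext (hOrbU n z x hz)
  · intro x n
    show E n (q n ⟨Φ x.1, hm x.2⟩) = _
    simp only [Equiv.trans_apply, Equiv.symm_apply_apply, Equiv.ofBijective_apply]
    rw [← hSq]
    simp only [heF, Equiv.symm_apply_apply]
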